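/- arXiv:1907.08581 — 2 statements merged into one kernel-verified Lean document; each statement's English description precedes it below -/
import Mathlib

section
/- Suppose ν = χ⁺ is a successor cardinal, ⟨A_{ξ,η} | ξ < ν, η < χ⟩ is an Ulam matrix over ν, α is an ordinal of cofinality ν, and φ : α → ν is a function such that some stationary s ⊆ α exists on which φ is strictly increasing and converging to ν (where stationarity of preimages is computed via a fixed normal function π_α : ν → α with club image, i.e., φ^{-1}[A] ∩ α is stationary means the preimage is stationary in α). Then there exist η < χ and a set x ∈ [ν]^ν such that, for all ξ ∈ x, the set φ^{-1}[A_{ξ,η}] ∩ α is stationary in α. -/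
open Cardinal Set Ordinal

/-- `C` is unbounded in `α`. -/
def UnbIn (C : Set Ordinal) (α : Ordinal) : Prop :=
  ∀ β < α, ∃ γ ∈ C, β < γ ∧ γ < α

/-- `C` is closed in `α`: every nonzero limit point of `C` below `α` belongs to `C`. -/
def ClosedIn (C : Set Ordinal) (α : Ordinal) : Prop :=
  ∀ β < α, 0 < β → UnbIn C β → β ∈ C

/-- `C` is a club (closed unbounded) subset of `α`. -/
def ClubIn (C : Set Ordinal) (α : Ordinal) : Prop :=
  C ⊆ Set.Iio α ∧ ClosedIn C α ∧ UnbIn C α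

/-- `S` is stationary in `α`. -/
def StatIn (S : Set Ordinal) (α : Ordinal) : Prop :=
  ∀ C, ClubIn C α → (S ∩ C).Nonempty

/-- The trace of `S` below `κ`: ordinals of uncountable cofinality in which `S` reflects. -/
def Tr (κ : Ordinal) (S : Set Ordinal) : Set Ordinal :=
  {β | β < κ ∧ Cardinal.aleph0 < β.cof ∧ StatIn (S ∩ Set.Iio β) β}

/-- `E^κ_θ`, the set of ordinals below `κ` of cofinality `θ`. -/
def Ecof (κ : Ordinal) (θ : Cardinal) : Set Ordinal :=
  {α | α < κ ∧ α.cof = θ}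

/-- The set of accumulation points of `C` that belong to `C`. -/
def accSet (C : Set Ordinal) : Set Ordinal :=
  {β ∈ C | 0 < β ∧ UnbIn C β}

/-- The order type of a set of ordinals: the unique ordinal whose initial segment
order-embeds onto the set. -/
noncomputable def otp (x : Set Ordinal) : Ordinal :=
  sInf {o : Ordinal | ∃ f : Ordinal → Ordinal,
    StrictMonoOn f (Set.Iio o) ∧ f '' Set.Iio o = x}

/-- The partition principle `Prt(S, θ, T)` (computed inside `κ`). -/
def Prt (κ : Ordinal) (S : Set Ordinal) (θ : Cardinal) (T : Set Ordinal) : Prop :=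
  ∃ P : Ordinal → Set Ordinal,
    (∀ i < θ.ord, P i ⊆ S) ∧
    Set.PairwiseDisjoint (Set.Iio θ.ord) P ∧
    (S ⊆ ⋃ i ∈ Set.Iio θ.ord, P i) ∧
    StatIn (T ∩ ⋂ i ∈ Set.Iio θ.ord, Tr κ (P i)) κ

/-- The principle `SNR⁻(κ, ν, T)`. -/
def SNRm (κ : Ordinal) (ν : Cardinal) (T : Set Ordinal) : Prop :=
  ∀ T₀ ⊆ T ∩ Ecof κ ν, StatIn T₀ κ →
    ∃ φ : Ordinal → Ordinal, (∀ β < κ, φ β < ν.ord) ∧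
      StatIn {α ∈ T₀ | ∃ c, ClubIn c α ∧ StrictMonoOn φ c} κ

/-- The simultaneous partition principle `Prp(S, ν, T)` (computed inside `κ`). -/
def Prp (κ : Ordinal) (S : Set Ordinal) (ν : Cardinal) (T : Set Ordinal) : Prop :=
  ∀ θ : Cardinal, θ ≤ ν →
    ∀ Si : Ordinal → Set Ordinal, (∀ i < θ.ord, Si i ⊆ S) →
      ∀ T' ⊆ T ∩ ⋂ i ∈ Set.Iio θ.ord, Tr κ (Si i), StatIn T' κ →
        ∃ I : Set Ordinal, I ⊆ Set.Iio θ.ord ∧ (∀ j < θ.ord, ∃ i ∈ I, j ≤ i) ∧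
          ∃ S' : Ordinal → Set Ordinal,
            (∀ i ∈ I, S' i ⊆ Si i) ∧
            (∀ i ∈ I, StatIn (S' i) κ) ∧
            Set.PairwiseDisjoint I S' ∧
            StatIn (T' ∩ ⋂ i ∈ I, Tr κ (S' i)) κ

/-- `⟨lams, f⟩` is a scale for the singular cardinal `lam`. -/
def IsScale (lam : Cardinal) (lams : Ordinal → Cardinal) (f : Ordinal → Ordinal → Ordinal) : Prop :=
  (∀ i < lam.ord.cof.ord, (lams i).IsRegular) ∧
  (∀ i < lam.ord.cof.ord, ∀ j < lam.ord.cof.ord, i < j → lams i < lams j) ∧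
  (∀ i < lam.ord.cof.ord, lams i < lam) ∧
  (∀ c < lam, ∃ i < lam.ord.cof.ord, c < lams i) ∧
  (∀ γ < (Order.succ lam).ord, ∀ i < lam.ord.cof.ord, f γ i < (lams i).ord) ∧
  (∀ γ < (Order.succ lam).ord, ∀ δ < (Order.succ lam).ord, γ < δ →
    ∃ i < lam.ord.cof.ord, ∀ j, i ≤ j → j < lam.ord.cof.ord → f γ j < f δ j) ∧
  (∀ g : Ordinal → Ordinal, (∀ i < lam.ord.cof.ord, g i < (lams i).ord) →
    ∃ γ < (Order.succ lam).ord, ∃ i < lam.ord.cof.ord,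
      ∀ j, i ≤ j → j < lam.ord.cof.ord → g j < f γ j)

/-- `α` is a very good point of the scale `f`. -/
def VeryGoodAt (lam : Cardinal) (f : Ordinal → Ordinal → Ordinal) (α : Ordinal) : Prop :=
  ∃ C, ClubIn C α ∧ ∃ i < lam.ord.cof.ord,
    ∀ γ ∈ C, ∀ δ ∈ C, γ < δ → ∀ j, i ≤ j → j < lam.ord.cof.ord → f γ j < f δ j

/-- The least size of a family of `θ`-sized subsets of `ν` such that every club
in `ν` contains a member of the family. -/
noncomputable def CC (ν θ : Cardinal) : Cardinal :=
  sInf { c : Cardinal | ∃ 𝒞 : Ordinal → Set Ordinal,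
    (∀ i < c.ord, 𝒞 i ⊆ Set.Iio ν.ord ∧ (otp (𝒞 i)).card = θ) ∧
    ∀ b, ClubIn b ν.ord → ∃ i < c.ord, 𝒞 i ⊆ b }

/-- `𝒟(ν, μ) = cf([ν]^μ, ⊇)`: the least size of a family of `μ`-sized subsets of `ν`
such that every `μ`-sized subset of `ν` contains a member of the family. -/
noncomputable def DD (ν μ : Cardinal) : Cardinal :=
  sInf { c : Cardinal | ∃ 𝒟 : Ordinal → Set Ordinal,
    (∀ i < c.ord, 𝒟 i ⊆ Set.Iio ν.ord ∧ (otp (𝒟 i)).card = μ) ∧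
    ∀ a : Set Ordinal, a ⊆ Set.Iio ν.ord → (otp a).card = μ → ∃ i < c.ord, 𝒟 i ⊆ a }


section Aux

universe u

lemma exists_enumOf {b : Ordinal.{u}} {x : Set Ordinal.{u}} (hx : x ⊆ Set.Iio b) :
    ∃ o : Ordinal.{u}, ∃ f : Ordinal.{u} → Ordinal.{u},
      StrictMonoOn f (Set.Iio o) ∧ f '' Set.Iio o = x := by
  classical
  let e := Ordinal.ToType.mk (o := b)
  let x' : Set b.ToType := {t | (e.symm t : Ordinal) ∈ x}
  let r := Subrel ((· < ·) : b.ToType → b.ToType → Prop) x'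
  haveI : IsWellOrder b.ToType (· < ·) := isWellOrder_lt
  haveI : IsWellOrder (Subtype x') r :=
    (inferInstance : IsWellOrder _ (Subrel ((· < ·) : b.ToType → b.ToType → Prop) (fun t => t ∈ x')))
  let f : Ordinal.{u} → Ordinal.{u} := fun i =>
    if h : i < Ordinal.type r then ((e.symm (Ordinal.enum r ⟨i, h⟩).val : Set.Iio b) : Ordinal)
    else 0
  have hf : ∀ (i) (h : i < Ordinal.type r),
      f i = ((e.symm (Ordinal.enum r ⟨i, h⟩).val : Set.Iio b) : Ordinal) := fun i h => dif_pos h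
  refine ⟨Ordinal.type r, f, ?_, ?_⟩
  · intro i hi j hj hij
    rw [Set.mem_Iio] at hi hj
    rw [hf i hi, hf j hj]
    have hr : r (Ordinal.enum r ⟨i, hi⟩) (Ordinal.enum r ⟨j, hj⟩) :=
      Ordinal.enum_lt_enum.2 (Subtype.mk_lt_mk.2 hij)
    have h2 : ((Ordinal.enum r ⟨i, hi⟩).val : b.ToType) < (Ordinal.enum r ⟨j, hj⟩).val := hr
    exact (e.symm.lt_iff_lt).2 h2
  · ext β
    constructor
    · rintro ⟨i, hi, rfl⟩
      rw [Set.mem_Iio] at hi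
      rw [hf i hi]
      exact (Ordinal.enum r ⟨i, hi⟩).2
    · intro hβ
      have hβb : β < b := hx hβ
      set t : b.ToType := e ⟨β, hβb⟩ with ht
      have htx : t ∈ x' := by
        simp only [x', Set.mem_setOf_eq, ht, e.symm_apply_apply]
        exact hβ
      refine ⟨Ordinal.typein r ⟨t, htx⟩, Ordinal.typein_lt_type r _, ?_⟩
      rw [hf _ (Ordinal.typein_lt_type r _)]
      rw [Ordinal.enum_typein]
      simp only [ht, e.symm_apply_apply]

lemma otp_spec {b : Ordinal.{u}} {x : Set Ordinal.{u}} (hx : x ⊆ Set.Iio b) :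
    ∃ f : Ordinal.{u} → Ordinal.{u},
      StrictMonoOn f (Set.Iio (otp x)) ∧ f '' Set.Iio (otp x) = x := by
  have hne : {o : Ordinal.{u} | ∃ f : Ordinal.{u} → Ordinal.{u},
      StrictMonoOn f (Set.Iio o) ∧ f '' Set.Iio o = x}.Nonempty := by
    obtain ⟨o, f, h1, h2⟩ := exists_enumOf hx
    exact ⟨o, f, h1, h2⟩
  exact csInf_mem hne

lemma otp_card {b : Ordinal.{u}} {x : Set Ordinal.{u}} (hx : x ⊆ Set.Iio b) :
    Cardinal.lift.{u+1, u} (otp x).card = #(↥x) := by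
  obtain ⟨f, h1, h2⟩ := otp_spec hx
  have hcalc : #(↥x) = Cardinal.lift.{u+1, u} (otp x).card := by
    conv_lhs => rw [← h2]
    rw [Cardinal.mk_image_eq_of_injOn f _ h1.injOn, Ordinal.mk_Iio_ordinal]
  exact hcalc.symm

lemma bounded_of_card_lt_cof {α : Ordinal.{u}} {x : Set Ordinal.{u}} (hx : x ⊆ Set.Iio α)
    (hℵ : ℵ₀ ≤ α.cof) (h : (otp x).card < α.cof) : ∃ γ < α, ∀ β ∈ x, β < γ := by
  obtain ⟨f, hmono, himg⟩ := otp_spec hx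
  have hlim : Order.IsSuccLimit α := Ordinal.aleph0_le_cof.1 hℵ
  have hb : Ordinal.bsup (otp x) (fun i _ => f i) < α := by
    apply Ordinal.bsup_lt_ord h
    intro i hi
    exact hx (himg ▸ ⟨i, hi, rfl⟩)
  refine ⟨Order.succ (Ordinal.bsup (otp x) (fun i _ => f i)), hlim.succ_lt hb, ?_⟩
  intro β hβ
  rw [← himg] at hβ
  obtain ⟨i, hi, rfl⟩ := hβ
  exact Order.lt_succ_iff.2 (Ordinal.le_bsup _ i hi)

lemma clubIn_biInter {α o : Ordinal.{u}} (ho : o ≠ 0) (hcard : o.card < α.cof)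
    (hℵ : ℵ₀ < α.cof) (C : Ordinal.{u} → Set Ordinal.{u}) (hC : ∀ i < o, ClubIn (C i) α) :
    ClubIn (⋂ i ∈ Set.Iio o, C i) α := by
  classical
  have hlim : Order.IsSuccLimit α := Ordinal.aleph0_le_cof.1 hℵ.le
  have h0o : (0 : Ordinal) < o := pos_iff_ne_zero.2 ho
  have pick : ∀ (i) (_ : i < o) (γ) (_ : γ < α), ∃ c ∈ C i, γ < c ∧ c < α :=
    fun i hi γ hγ => (hC i hi).2.2 γ hγ
  let next : Ordinal.{u} → Ordinal.{u} := fun γ =>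
    if h : γ < α then
      Order.succ (Ordinal.bsup o (fun i hi => Classical.choose (pick i hi γ h)))
    else 0
  have hnext : ∀ γ (h : γ < α), next γ < α ∧ γ < next γ ∧
      ∀ i (_ : i < o), ∃ c ∈ C i, γ < c ∧ c < next γ := by
    intro γ h
    have hbs : Ordinal.bsup o (fun i hi => Classical.choose (pick i hi γ h)) < α := by
      apply Ordinal.bsup_lt_ord hcard
      intro i hi
      exact (Classical.choose_spec (pick i hi γ h)).2.2
    have hnv : next γ =
        Order.succ (Ordinal.bsup o fun i hi => Classical.choose (pick i hi γ h)) := dif_pos h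
    refine ⟨?_, ?_, ?_⟩
    · rw [hnv]; exact hlim.succ_lt hbs
    · rw [hnv]
      calc γ < Classical.choose (pick 0 h0o γ h) := (Classical.choose_spec (pick 0 h0o γ h)).2.1
        _ ≤ _ := le_trans (Ordinal.le_bsup _ 0 h0o) (Order.le_succ _)
    · intro i hi
      refine ⟨Classical.choose (pick i hi γ h), (Classical.choose_spec (pick i hi γ h)).1,
        (Classical.choose_spec (pick i hi γ h)).2.1, ?_⟩
      rw [hnv]
      exact Order.lt_succ_iff.2 (Ordinal.le_bsup _ i hi)
  refine ⟨?_, ?_, ?_⟩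
  · intro β hβ
    exact (hC 0 h0o).1 (Set.mem_iInter₂.1 hβ 0 h0o)
  · intro β hβ h0 hunb
    apply Set.mem_iInter₂.2
    intro i hi
    refine (hC i hi).2.1 β hβ h0 ?_
    intro b hb
    obtain ⟨c, hc, hbc, hcβ⟩ := hunb b hb
    exact ⟨c, Set.mem_iInter₂.1 hc i hi, hbc, hcβ⟩
  · intro β hβ
    let g : ℕ → Ordinal.{u} := fun n => Nat.rec (Order.succ β) (fun _ ih => next ih) n
    have hg : ∀ n, g n < α := by
      intro n
      induction n with
      | zero => exact hlim.succ_lt hβ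
      | succ n ih => exact (hnext (g n) ih).1
    have hglt : ∀ n, g n < g (n + 1) := fun n => (hnext (g n) (hg n)).2.1
    have hsup : (⨆ n, g n) < α := by
      apply Ordinal.iSup_lt_ord_lift ?_ hg
      simpa using hℵ
    have hβsup : β < (⨆ n, g n) :=
      lt_of_lt_of_le (Order.lt_succ β) (Ordinal.le_iSup g 0)
    have hmem : ∀ i (_ : i < o), (⨆ n, g n) ∈ C i := by
      intro i hi
      refine (hC i hi).2.1 _ hsup (lt_of_le_of_lt (zero_le : 0 ≤ β) hβsup) ?_
      intro b hb
      obtain ⟨n, hn⟩ := Ordinal.lt_iSup_iff.1 hb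
      obtain ⟨c, hc, h1, h2⟩ := (hnext (g n) (hg n)).2.2 i hi
      exact ⟨c, hc, lt_trans hn h1, lt_of_lt_of_le h2 (Ordinal.le_iSup g (n + 1))⟩
    exact ⟨(⨆ n, g n), Set.mem_iInter₂.2 hmem, hβsup, hsup⟩

lemma clubIn_Ioo {α γ₀ : Ordinal.{u}} (hγ : γ₀ < α) (hℵ : ℵ₀ ≤ α.cof) :
    ClubIn (Set.Ioo γ₀ α) α := by
  have hlim : Order.IsSuccLimit α := Ordinal.aleph0_le_cof.1 hℵ
  refine ⟨fun β hβ => hβ.2, ?_, ?_⟩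
  · intro β hβ h0 hunb
    obtain ⟨c, hc, -, hcβ⟩ := hunb 0 h0
    exact ⟨lt_trans hc.1 hcβ, hβ⟩
  · intro β hβ
    refine ⟨Order.succ (max β γ₀), ⟨?_, ?_⟩, ?_, ?_⟩
    · exact lt_of_le_of_lt (le_max_right β γ₀) (Order.lt_succ _)
    · exact hlim.succ_lt (max_lt hβ hγ)
    · exact lt_of_le_of_lt (le_max_left β γ₀) (Order.lt_succ _)
    · exact hlim.succ_lt (max_lt hβ hγ)

lemma clubIn_inter {α : Ordinal.{u}} (hℵ : ℵ₀ < α.cof) {E F : Set Ordinal.{u}}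
    (hE : ClubIn E α) (hF : ClubIn F α) : ClubIn (E ∩ F) α := by
  classical
  have h02 : (0 : Ordinal.{u}) < 2 := by
    have h := Order.lt_succ (1 : Ordinal.{u})
    rw [← Ordinal.add_one_eq_succ, one_add_one_eq_two] at h
    exact lt_trans zero_lt_one h
  have h12 : (1 : Ordinal.{u}) < 2 := by
    have h := Order.lt_succ (1 : Ordinal.{u})
    rwa [← Ordinal.add_one_eq_succ, one_add_one_eq_two] at h
  have h20 : (2 : Ordinal.{u}) ≠ 0 := ne_of_gt h02
  have h2card : (2 : Ordinal.{u}).card < α.cof := by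
    rw [Ordinal.card_ofNat]
    exact lt_of_lt_of_le (Cardinal.nat_lt_aleph0 2) hℵ.le
  have hmain := clubIn_biInter h20 h2card hℵ (fun i => if i = 0 then E else F) ?_
  · have heq : (⋂ i ∈ Set.Iio (2 : Ordinal.{u}), (fun i => if i = 0 then E else F) i) = E ∩ F := by
      ext β
      simp only [Set.mem_iInter, Set.mem_inter_iff]
      constructor
      · intro h
        have h0 := h 0 h02
        have h1 := h 1 h12
        simp only [if_pos rfl] at h0
        rw [if_neg one_ne_zero] at h1
        exact ⟨h0, h1⟩
      · rintro ⟨hβE, hβF⟩ i hi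
        by_cases h : i = 0
        · simpa [h] using hβE
        · simpa [h] using hβF
    rwa [heq] at hmain
  · intro i hi
    by_cases h : i = 0
    · simpa [h] using hE
    · simpa [h] using hF

lemma mk_image_ord {β : Type u} (f : β → Ordinal.{u}) (s : Set β) (hf : Function.Injective f) :
    #(↥(f '' s)) = Cardinal.lift.{u+1, u} #(↥s) := by
  have h := Cardinal.mk_image_eq_lift f s hf
  rwa [Cardinal.lift_id'.{u, u+1}] at h

end Aux

theorem statement4 (χ ν : Cardinal) (hχ : Cardinal.aleph0 ≤ χ) (hν : ν = Order.succ χ)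
    (A : Ordinal → Ordinal → Set Ordinal)
    (hAsub : ∀ ξ < ν.ord, ∀ η < χ.ord, A ξ η ⊆ Set.Iio ν.ord)
    (hUlam1 : ∀ ξ < ν.ord, (otp (Set.Iio ν.ord \ ⋃ η ∈ Set.Iio χ.ord, A ξ η)).card ≤ χ)
    (hUlam2 : ∀ η < χ.ord, ∀ ξ < ν.ord, ∀ ξ' < ν.ord, ξ ≠ ξ' → Disjoint (A ξ η) (A ξ' η))
    (α : Ordinal) (hα : α.cof = ν)
    (φ : Ordinal → Ordinal) (hφ : ∀ β < α, φ β < ν.ord)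
    (s : Set Ordinal) (hs : s ⊆ Set.Iio α) (hstat : StatIn s α)
    (hmono : StrictMonoOn φ s) (hconv : ∀ γ < ν.ord, ∃ β ∈ s, γ < φ β) :
    ∃ η < χ.ord, ∃ x : Set Ordinal, x ⊆ Set.Iio ν.ord ∧ (otp x).card = ν ∧
      ∀ ξ ∈ x, StatIn ({β | φ β ∈ A ξ η} ∩ Set.Iio α) α := by
  classical
  have hχpos : (0 : Cardinal) < χ := lt_of_lt_of_le Cardinal.aleph0_pos hχ
  have hχν : χ < ν := by rw [hν]; exact Order.lt_succ χ
  have hℵν : ℵ₀ < ν := lt_of_le_of_lt hχ hχν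
  have hreg : ν.IsRegular := by rw [hν]; exact Cardinal.isRegular_succ hχ
  have hℵcof : ℵ₀ < α.cof := by rw [hα]; exact hℵν
  have hχord0 : (0 : Ordinal) < χ.ord := by
    rw [← Cardinal.ord_zero]
    exact Cardinal.ord_lt_ord.2 hχpos
  have key : ∀ ξ, ξ < ν.ord → ∃ η < χ.ord,
      StatIn ({β | φ β ∈ A ξ η} ∩ Set.Iio α) α := by
    intro ξ hξ
    by_contra hcon
    push_neg at hcon
    have hclubs : ∀ η, ∃ C, η < χ.ord → ClubIn C α ∧
        ∀ β, β ∈ ({β | φ β ∈ A ξ η} ∩ Set.Iio α) → β ∉ C := by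
      intro η
      by_cases hη : η < χ.ord
      · have h1 := hcon η hη
        unfold StatIn at h1
        push_neg at h1
        obtain ⟨C, hC1, hC2⟩ := h1
        exact ⟨C, fun _ => ⟨hC1, fun β hβ hβC =>
          Set.eq_empty_iff_forall_notMem.1 hC2 β ⟨hβ, hβC⟩⟩⟩
      · exact ⟨∅, fun h => absurd h hη⟩
    choose Cl hCl using hclubs
    set D : Set Ordinal := Set.Iio ν.ord \ ⋃ η ∈ Set.Iio χ.ord, A ξ η with hDdef
    have hDsub : D ⊆ Set.Iio ν.ord := Set.diff_subset
    have hDcard : (otp D).card ≤ χ := hUlam1 ξ hξ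
    set sD : Set Ordinal := {β ∈ s | φ β ∈ D} with hsDdef
    have hsDs : sD ⊆ s := fun β hβ => hβ.1
    have hsDα : sD ⊆ Set.Iio α := fun β hβ => hs hβ.1
    have hinj : Set.InjOn φ sD := hmono.injOn.mono hsDs
    have himg : φ '' sD ⊆ D := by rintro _ ⟨β, hβ, rfl⟩; exact hβ.2
    have hcard1 : #(↥sD) ≤ #(↥D) := by
      rw [← Cardinal.mk_image_eq_of_injOn φ sD hinj]
      exact Cardinal.mk_le_mk_of_subset himg
    have hcard2 : (otp sD).card ≤ χ := by
      rw [← otp_card hsDα, ← otp_card hDsub] at hcard1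
      exact (Cardinal.lift_le.1 hcard1).trans hDcard
    have hsmall : (otp sD).card < α.cof := by
      rw [hα]; exact lt_of_le_of_lt hcard2 hχν
    obtain ⟨γ₀, hγ₀α, hγ₀⟩ := bounded_of_card_lt_cof hsDα hℵcof.le hsmall
    have hχordne : χ.ord ≠ 0 := ne_of_gt hχord0
    have hχcard : χ.ord.card < α.cof := by
      rw [Cardinal.card_ord, hα]; exact hχν
    have hE : ClubIn (⋂ η ∈ Set.Iio χ.ord, Cl η) α :=
      clubIn_biInter hχordne hχcard hℵcof Cl (fun η hη => (hCl η hη).1)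
    have hF : ClubIn (Set.Ioo γ₀ α) α := clubIn_Ioo hγ₀α hℵcof.le
    obtain ⟨β, hβs, hβEF⟩ := hstat _ (clubIn_inter hℵcof hE hF)
    have hβα : β < α := hs hβs
    have hφβ : φ β < ν.ord := hφ β hβα
    by_cases hcase : ∃ η, η < χ.ord ∧ φ β ∈ A ξ η
    · obtain ⟨η, hη, hmem⟩ := hcase
      have hβCl : β ∈ Cl η := Set.mem_iInter₂.1 hβEF.1 η hη
      exact (hCl η hη).2 β ⟨hmem, hβα⟩ hβCl
    · have hnot : φ β ∉ ⋃ η ∈ Set.Iio χ.ord, A ξ η := by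
        intro hmem
        obtain ⟨η, hη, hm⟩ := Set.mem_iUnion₂.1 hmem
        exact hcase ⟨η, hη, hm⟩
      have hβsD : β ∈ sD := ⟨hβs, hφβ, hnot⟩
      exact absurd (hγ₀ β hβsD) (asymm hβEF.2.1)
  have key' : ∀ ξ : Ordinal, ∃ η, η < χ.ord ∧
      (ξ < ν.ord → StatIn ({β | φ β ∈ A ξ η} ∩ Set.Iio α) α) := by
    intro ξ
    by_cases hξ : ξ < ν.ord
    · obtain ⟨η, hη, hst⟩ := key ξ hξ
      exact ⟨η, hη, fun _ => hst⟩
    · exact ⟨0, hχord0, fun h => absurd h hξ⟩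
  choose h hh1 hh2 using key'
  let eν := Ordinal.ToType.mk (o := ν.ord)
  let eχ := Ordinal.ToType.mk (o := χ.ord)
  let H : ν.ord.ToType → χ.ord.ToType := fun t =>
    eχ ⟨h ((eν.symm t : Set.Iio ν.ord) : Ordinal), hh1 _⟩
  have hβcard : #(ν.ord.ToType) = ν := by rw [Cardinal.mk_toType, Cardinal.card_ord]
  have hacard : #(χ.ord.ToType) = χ := by rw [Cardinal.mk_toType, Cardinal.card_ord]
  obtain ⟨a, ha⟩ := Cardinal.infinite_pigeonhole H (by rw [hβcard]; exact hℵν.le)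
    (by rw [hβcard, hacard, hreg.cof_eq]; exact hχν)
  rw [hβcard] at ha
  set η : Ordinal := ((eχ.symm a : Set.Iio χ.ord) : Ordinal) with hηdef
  have hηχ : η < χ.ord := (eχ.symm a).2
  refine ⟨η, hηχ, {ξ | ξ < ν.ord ∧ h ξ = η}, fun ξ hξ => hξ.1, ?_, ?_⟩
  · have hxsub : {ξ | ξ < ν.ord ∧ h ξ = η} ⊆ Set.Iio ν.ord := fun ξ hξ => hξ.1
    have hxeq : {ξ | ξ < ν.ord ∧ h ξ = η} =
        (fun t => ((eν.symm t : Set.Iio ν.ord) : Ordinal)) '' (H ⁻¹' {a}) := by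
      ext ξ
      constructor
      · rintro ⟨hξν, hξη⟩
        refine ⟨eν ⟨ξ, hξν⟩, ?_, ?_⟩
        · refine Set.mem_preimage.2 (Set.mem_singleton_iff.2 ?_)
          show eχ _ = a
          have harg : (⟨h ((eν.symm (eν ⟨ξ, hξν⟩) : Set.Iio ν.ord) : Ordinal), hh1 _⟩ :
              Set.Iio χ.ord) = eχ.symm a := by
            apply Subtype.ext
            show h _ = η
            rw [eν.symm_apply_apply]
            exact hξη
          rw [harg, eχ.apply_symm_apply]
        · show ((eν.symm (eν ⟨ξ, hξν⟩) : Set.Iio ν.ord) : Ordinal) = ξ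
          rw [eν.symm_apply_apply]
      · rintro ⟨t, hta, rfl⟩
        refine ⟨(eν.symm t).2, ?_⟩
        have hHt : H t = a := hta
        have h2 : (⟨h ((eν.symm t : Set.Iio ν.ord) : Ordinal), hh1 _⟩ : Set.Iio χ.ord) =
            eχ.symm a := by
          rw [← hHt]
          exact (eχ.symm_apply_apply _).symm
        exact congrArg Subtype.val h2
    have hinj2 : Function.Injective
        (fun t : ν.ord.ToType => ((eν.symm t : Set.Iio ν.ord) : Ordinal)) :=
      fun t1 t2 h12 => eν.symm.injective (Subtype.ext h12)
    have hmk := mk_image_ord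
      (fun t : ν.ord.ToType => ((eν.symm t : Set.Iio ν.ord) : Ordinal)) (H ⁻¹' {a}) hinj2
    apply Cardinal.lift_inj.1
    rw [otp_card hxsub, hxeq, hmk, ha]
  · rintro ξ ⟨hξν, hξη⟩
    have := hh2 ξ hξν
    rwa [hξη] at this
end

section
/- Suppose ν < κ are regular uncountable cardinals, T ⊆ E^κ_ν, and there exists a function f : κ → ν such that T ∩ ⋃_{i<ν} Tr(f^{-1}{i}) is nonstationary. Then SNR⁻(κ,ν,T) holds: for every stationary T₀ ⊆ T ∩ E^κ_ν, there exists φ : κ → ν such that for stationarily many α ∈ T₀ there is a club c in α on which φ is strictly increasing. -/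
open Cardinal Set Ordinal

section Auxiliary

open Ordinal

lemma clubIn_biInter_s8 {α : Ordinal} (hα : Cardinal.aleph0 < α.cof) (s : Ordinal)
    (hs : s.card < α.cof) (d : Ordinal → Set Ordinal)
    (hd : ∀ i < s, ClubIn (d i) α) :
    ClubIn (Set.Iio α ∩ ⋂ i ∈ Set.Iio s, d i) α := by
  have hlim : Order.IsSuccLimit α := Ordinal.aleph0_le_cof.1 hα.le
  have hmem : ∀ x, x ∈ Set.Iio α ∩ ⋂ i ∈ Set.Iio s, d i ↔ x < α ∧ ∀ i < s, x ∈ d i := by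
    intro x
    simp [Set.mem_iInter]
  refine ⟨Set.inter_subset_left, ?_, ?_⟩
  · intro β hβ h0 hunb
    rw [hmem]
    refine ⟨hβ, fun i hi => (hd i hi).2.1 β hβ h0 ?_⟩
    intro y hy
    obtain ⟨γ, hγ, h1, h2⟩ := hunb y hy
    exact ⟨γ, ((hmem γ).1 hγ).2 i hi, h1, h2⟩
  · intro x hx
    have hGex : ∀ y, y < α → ∃ z, y < z ∧ z < α ∧ ∀ i < s, ∃ γ ∈ d i, y < γ ∧ γ ≤ z := by
      intro y hy
      have hpick : ∀ i (hi : i < s), ∃ γ, γ ∈ d i ∧ y < γ ∧ γ < α := by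
        intro i hi
        obtain ⟨γ, h1, h2, h3⟩ := (hd i hi).2.2 y hy
        exact ⟨γ, h1, h2, h3⟩
      refine ⟨max (y + 1) (Ordinal.bsup s fun i hi => (hpick i hi).choose), ?_, ?_, ?_⟩
      · exact lt_max_of_lt_left (lt_of_lt_of_le (lt_add_one y) le_rfl)
      · refine max_lt ?_ ?_
        · rw [Ordinal.add_one_eq_succ]; exact hlim.succ_lt hy
        · exact Ordinal.bsup_lt_ord hs fun i hi => (hpick i hi).choose_spec.2.2
      · intro i hi
        exact ⟨(hpick i hi).choose, (hpick i hi).choose_spec.1, (hpick i hi).choose_spec.2.1,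
          le_max_of_le_right (Ordinal.le_bsup _ i hi)⟩
    let G : Ordinal → Ordinal := fun y => if hy : y < α then (hGex y hy).choose else 0
    have hG : ∀ y (hy : y < α), y < G y ∧ G y < α ∧ ∀ i < s, ∃ γ ∈ d i, y < γ ∧ γ ≤ G y := by
      intro y hy
      simpa only [G, dif_pos hy] using (hGex y hy).choose_spec
    let b : ℕ → Ordinal := fun n => G^[n] (G x)
    have hb0 : x < b 0 := (hG x hx).1
    have hbsucc : ∀ n, b (n + 1) = G (b n) := fun n => Function.iterate_succ_apply' G n (G x)
    have hblt : ∀ n, b n < α := by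
      intro n; induction n with
      | zero => exact (hG x hx).2.1
      | succ n ih => rw [hbsucc]; exact (hG _ ih).2.1
    have hbmono : ∀ n, b n < b (n + 1) := fun n => by rw [hbsucc]; exact (hG _ (hblt n)).1
    have hle : ∀ n, b n ≤ iSup b := Ordinal.le_iSup b
    have hβα : iSup b < α := Ordinal.iSup_lt_ord_lift (c := α) (by simp only [Cardinal.mk_nat, Cardinal.lift_aleph0]; exact hα) hblt
    have hltβ : ∀ n, b n < iSup b := fun n => lt_of_lt_of_le (hbmono n) (hle (n + 1))
    have hxβ : x < iSup b := lt_of_lt_of_le hb0 (hle 0)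
    refine ⟨iSup b, ?_, hxβ, hβα⟩
    rw [hmem]
    refine ⟨hβα, fun i hi => ?_⟩
    refine (hd i hi).2.1 _ hβα (lt_of_le_of_lt (zero_le (a := x)) hxβ) ?_
    intro y hy
    obtain ⟨n, hn⟩ := Ordinal.lt_iSup_iff.1 hy
    obtain ⟨γ, hγd, h1, h2⟩ := (hG (b n) (hblt n)).2.2 i hi
    exact ⟨γ, hγd, lt_trans hn h1, lt_of_le_of_lt (h2.trans (hbsucc n).ge) (hltβ (n + 1))⟩

lemma clubIn_inter_s8 {α : Ordinal} (hα : Cardinal.aleph0 < α.cof) {C D : Set Ordinal}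
    (hC : ClubIn C α) (hD : ClubIn D α) : ClubIn (C ∩ D) α := by
  have h2 : ((2 : Ordinal)).card < α.cof := by
    have h : ((2 : Ordinal)).card = 2 := by simp
    rw [h]
    exact lt_trans (by exact_mod_cast Cardinal.nat_lt_aleph0 2) hα
  have key := clubIn_biInter_s8 hα 2 h2 (fun i => if i = 0 then C else D) ?_
  · have hset : Set.Iio α ∩ ⋂ i ∈ Set.Iio (2 : Ordinal), (fun i => if i = 0 then C else D) i
        = C ∩ D := by
      ext x
      simp only [Set.mem_inter_iff, Set.mem_iInter, Set.mem_Iio]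
      constructor
      · rintro ⟨hxα, hi⟩
        have h0 := hi 0 (by exact zero_lt_two)
        have h1 := hi 1 (by exact one_lt_two)
        simp only [if_pos rfl] at h0
        simp only [if_neg one_ne_zero] at h1
        exact ⟨h0, h1⟩
      · rintro ⟨hxC, hxD⟩
        refine ⟨hC.1 hxC, fun i hi => ?_⟩
        by_cases h : i = 0 <;> simp [h, hxC, hxD]
    rwa [hset] at key
  · intro i hi
    by_cases h : i = 0 <;> simp [h, hC, hD]

universe u

lemma key_lemma {ν : Cardinal.{u}} (hν : ν.IsRegular) (hνu : Cardinal.aleph0 < ν)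
    {α : Ordinal.{u}} (hα : α.cof = ν) (f : Ordinal → Ordinal)
    (hf : ∀ β < α, f β < ν.ord)
    (d : Ordinal → Set Ordinal) (hd : ∀ i < ν.ord, ClubIn (d i) α)
    (hdf : ∀ i < ν.ord, ∀ β ∈ d i, f β ≠ i) :
    ∃ c, ClubIn c α ∧ StrictMonoOn f c := by
  have hνord : Order.IsSuccLimit ν.ord := Cardinal.isSuccLimit_ord hν.aleph0_le
  have hcof : Cardinal.aleph0 < α.cof := by rw [hα]; exact hνu
  have hlim : Order.IsSuccLimit α := Ordinal.aleph0_le_cof.1 hcof.le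
  have hco : α.cof.ord = ν.ord := by rw [hα]
  -- fundamental sequence
  obtain ⟨e, he⟩ := Ordinal.exists_fundamental_sequence α
  set E : Ordinal → Ordinal := fun ξ => if h : ξ < α.cof.ord then e ξ h else 0 with hE
  have hE1 : ∀ ξ, ξ < ν.ord → E ξ < α := by
    intro ξ hξ
    rw [← hco] at hξ
    simp only [hE, dif_pos hξ]
    conv_rhs => rw [← he.2.2]
    exact Ordinal.lt_blsub _ _ _
  have hE2 : ∀ x, x < α → ∃ ξ, ξ < ν.ord ∧ x ≤ E ξ := by
    intro x hx
    rw [← he.2.2] at hx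
    obtain ⟨i, hi, hxi⟩ := Ordinal.lt_blsub_iff.1 hx
    exact ⟨i, hco ▸ hi, by simp only [hE, dif_pos hi]; exact hxi⟩
  have hE3 : ∀ ξ, ξ + 1 < ν.ord → E ξ < E (ξ + 1) := by
    intro ξ hξ
    rw [← hco] at hξ
    have hξ' : ξ < α.cof.ord := lt_trans (lt_add_one ξ) hξ
    simp only [hE, dif_pos hξ, dif_pos hξ']
    exact he.2.1 _ _ (lt_add_one ξ)
  -- intersections of the clubs
  set Dset : Ordinal → Set Ordinal := fun t => Set.Iio α ∩ ⋂ i ∈ Set.Iio t, d i with hDs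
  have hDset : ∀ t, t < ν.ord → ClubIn (Dset t) α := fun t ht =>
    clubIn_biInter_s8 hcof t (by rw [hα]; exact Cardinal.lt_ord.1 ht) d
      (fun i hi => hd i (hi.trans ht))
  have hDmem : ∀ t x, x ∈ Dset t → x < α ∧ ∀ i < t, x ∈ d i := by
    intro t x hx
    refine ⟨hx.1, fun i hi => ?_⟩
    exact Set.mem_iInter₂.1 hx.2 i hi
  have hPex : ∀ t y, t < ν.ord → y < α → ∃ γ, γ ∈ Dset t ∧ y < γ ∧ γ < α := by
    intro t y ht hy
    obtain ⟨γ, h1, h2, h3⟩ := (hDset t ht).2.2 y hy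
    exact ⟨γ, h1, h2, h3⟩
  set P : Ordinal → Ordinal → Ordinal := fun t y =>
    if h : t < ν.ord ∧ y < α then (hPex t y h.1 h.2).choose else 0 with hPdef
  have hP : ∀ t y, t < ν.ord → y < α → P t y ∈ Dset t ∧ y < P t y ∧ P t y < α := by
    intro t y ht hy
    simpa only [hPdef, dif_pos (show t < ν.ord ∧ y < α from ⟨ht, hy⟩)] using
      (hPex t y ht hy).choose_spec
  -- the recursion
  set g : Ordinal → Ordinal := fun ξ =>
    Ordinal.limitRecOn ξ 0
      (fun η gη => P (max (f gη + 1) (η + 1)) (max gη (E (η + 1))))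
      (fun ξ' _ ih => Ordinal.bsup.{u,u} ξ' fun η hη => ih η hη) with hgdef
  have hg0 : g 0 = 0 := Ordinal.limitRecOn_zero _ _ _
  have hgsucc : ∀ η, g (η + 1) = P (max (f (g η) + 1) (η + 1)) (max (g η) (E (η + 1))) := by
    intro η
    rw [Ordinal.add_one_eq_succ]
    exact Ordinal.limitRecOn_succ _ _ _ _
  have hglim : ∀ ξ, Order.IsSuccLimit ξ → g ξ = Ordinal.bsup.{u,u} ξ (fun η _ => g η) := by
    intro ξ hξ
    exact Ordinal.limitRecOn_limit _ _ _ _ hξ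
  have hsucclt : ∀ η, η + 1 < ν.ord → g η < α → max (f (g η) + 1) (η + 1) < ν.ord := by
    intro η hη hgη
    refine max_lt ?_ hη
    rw [Ordinal.add_one_eq_succ]
    exact hνord.succ_lt (hf _ hgη)
  have hstep : ∀ η, η + 1 < ν.ord → g η < α →
      g (η + 1) ∈ Dset (max (f (g η) + 1) (η + 1)) ∧ max (g η) (E (η + 1)) < g (η + 1) ∧
        g (η + 1) < α := by
    intro η hη hgη
    rw [hgsucc]
    exact hP _ _ (hsucclt η hη hgη) (max_lt hgη (hE1 _ hη))
  have hfsucc : ∀ η, η + 1 < ν.ord → g η < α → f (g η) < f (g (η + 1)) := by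
    intro η hη hgη
    by_contra h
    push_neg at h
    have hlt : f (g (η + 1)) < max (f (g η) + 1) (η + 1) :=
      lt_max_of_lt_left (h.trans_lt (lt_add_one _))
    have hmem := (hDmem _ _ (hstep η hη hgη).1).2 _ hlt
    exact hdf _ (hlt.trans (hsucclt η hη hgη)) _ hmem rfl
  -- the main invariant
  have main : ∀ ξ, ξ < ν.ord → g ξ < α ∧ ∀ η < ξ, g η < g ξ ∧ f (g η) < f (g ξ) := by
    intro ξ
    induction ξ using Ordinal.limitRecOn with
    | zero =>
      intro _
      refine ⟨by rw [hg0]; exact hlim.pos, fun η hη => absurd hη (not_lt_zero (a := η))⟩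
    | add_one ζ ih =>
      intro hξ
      have hζ : ζ < ν.ord := lt_trans (lt_add_one ζ) hξ
      obtain ⟨hζα, hmono⟩ := ih hζ
      have hs := hstep ζ hξ hζα
      have h1 : g ζ < g (ζ + 1) := lt_of_le_of_lt (le_max_left _ _) hs.2.1
      have h2 : f (g ζ) < f (g (ζ + 1)) := hfsucc ζ hξ hζα
      refine ⟨hs.2.2, fun η hη => ?_⟩
      rw [Ordinal.add_one_eq_succ, Order.lt_succ_iff] at hη
      rcases lt_or_eq_of_le hη with h | h
      · exact ⟨lt_trans (hmono η h).1 h1, lt_trans (hmono η h).2 h2⟩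
      · rw [h]; exact ⟨h1, h2⟩
    | limit ξ hξl ih =>
      intro hξ
      have hbs : g ξ = Ordinal.bsup.{u,u} ξ (fun η _ => g η) := hglim ξ hξl
      have hgη : ∀ η, η < ξ → g η < α := fun η hη => (ih η hη (hη.trans hξ)).1
      have hsuccξ : ∀ η, η < ξ → η + 1 < ξ := by
        intro η hη
        rw [Ordinal.add_one_eq_succ]
        exact hξl.succ_lt hη
      have hgξα : g ξ < α := by
        rw [hbs]
        exact Ordinal.bsup_lt_ord (by rw [hα]; exact Cardinal.lt_ord.1 hξ) hgη
      have hmono2 : ∀ ζ ζ', ζ ≤ ζ' → ζ' < ξ → g ζ ≤ g ζ' ∧ f (g ζ) ≤ f (g ζ') := by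
        intro ζ ζ' hle hζ'
        rcases lt_or_eq_of_le hle with h | h
        · exact ⟨((ih ζ' hζ' (hζ'.trans hξ)).2 ζ h).1.le, ((ih ζ' hζ' (hζ'.trans hξ)).2 ζ h).2.le⟩
        · rw [h]; exact ⟨le_rfl, le_rfl⟩
      have hmonog : ∀ η, η < ξ → g η < g ξ := by
        intro η hη
        have h1 : η + 1 < ξ := hsuccξ η hη
        have h2 : g η < g (η + 1) :=
          lt_of_le_of_lt (le_max_left _ _) (hstep η (h1.trans hξ) (hgη η hη)).2.1
        calc g η < g (η + 1) := h2
          _ ≤ g ξ := by rw [hbs]; exact Ordinal.le_bsup _ (η + 1) h1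
      refine ⟨hgξα, fun η hη => ⟨hmonog η hη, ?_⟩⟩
      have hgξpos : 0 < g ξ := lt_of_le_of_lt (zero_le (a := g η)) (hmonog η hη)
      have hdmem : ∀ i, i ≤ f (g η) → g ξ ∈ d i := by
        intro i hi
        have hiν : i < ν.ord := lt_of_le_of_lt hi (hf _ (hgη η hη))
        refine (hd i hiν).2.1 (g ξ) hgξα hgξpos ?_
        intro y hy
        rw [hbs] at hy
        obtain ⟨ζ, hζξ, hyζ⟩ := (Ordinal.lt_bsup _).1 hy
        have hζ'ξ : max ζ η < ξ := max_lt hζξ hη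
        have hζ'1 : max ζ η + 1 < ξ := hsuccξ _ hζ'ξ
        have hsz := hstep (max ζ η) (hζ'1.trans hξ) (hgη _ hζ'ξ)
        refine ⟨g (max ζ η + 1), ?_, ?_, hmonog _ hζ'1⟩
        · refine (hDmem _ _ hsz.1).2 i ?_
          have hfle : f (g η) ≤ f (g (max ζ η)) := (hmono2 η (max ζ η) (le_max_right ζ η) hζ'ξ).2
          exact lt_max_of_lt_left (lt_of_le_of_lt (hi.trans hfle) (lt_add_one _))
        · have hgζle : g ζ ≤ g (max ζ η) := (hmono2 ζ (max ζ η) (le_max_left ζ η) hζ'ξ).1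
          exact lt_of_lt_of_le hyζ (hgζle.trans (le_of_lt
            (lt_of_le_of_lt (le_max_left _ _) hsz.2.1)))
      by_contra h
      push_neg at h
      exact hdf (f (g ξ)) (lt_of_le_of_lt h (hf _ (hgη η hη))) (g ξ) (hdmem _ h) rfl
  have gmono_le : ∀ η ξ, η ≤ ξ → ξ < ν.ord → g η ≤ g ξ := by
    intro η ξ hle hξ
    rcases lt_or_eq_of_le hle with h | h
    · exact ((main ξ hξ).2 η h).1.le
    · rw [h]
  -- the club
  refine ⟨g '' Set.Iio ν.ord, ⟨?_, ?_, ?_⟩, ?_⟩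
  · rintro _ ⟨ξ, hξ, rfl⟩
    exact (main ξ hξ).1
  · -- closed
    intro β hβ h0 hunb
    have hex : ∃ ξ, ξ < ν.ord ∧ β ≤ g ξ := by
      by_contra h
      push_neg at h
      have hαβ : α ≤ β := by
        refine le_of_forall_lt fun x hx => ?_
        obtain ⟨ξ, hξ, hxE⟩ := hE2 x hx
        have hξ1 : ξ + 1 < ν.ord := by
          rw [Ordinal.add_one_eq_succ]; exact hνord.succ_lt hξ
        have hEg : E (ξ + 1) < g (ξ + 1) :=
          lt_of_le_of_lt (le_max_right _ _) (hstep ξ hξ1 (main ξ hξ).1).2.1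
        exact lt_trans (lt_of_le_of_lt (hxE.trans (hE3 ξ hξ1).le) hEg) (h (ξ + 1) hξ1)
      exact absurd hβ (not_lt.2 hαβ)
    have hne : {ξ | ξ < ν.ord ∧ β ≤ g ξ}.Nonempty := ⟨hex.choose, hex.choose_spec⟩
    set ξ₀ := sInf {ξ | ξ < ν.ord ∧ β ≤ g ξ} with hξ₀def
    have hξ₀mem : ξ₀ < ν.ord ∧ β ≤ g ξ₀ := csInf_mem hne
    have hlt₀ : ∀ η, η < ξ₀ → g η < β := by
      intro η hη
      by_contra hc
      push_neg at hc
      have hmem : η ∈ {ξ | ξ < ν.ord ∧ β ≤ g ξ} := ⟨hη.trans hξ₀mem.1, hc⟩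
      exact absurd (csInf_le' hmem) (not_le.2 hη)
    have h0' : ξ₀ ≠ 0 := by
      intro h
      have := hξ₀mem.2
      rw [h, hg0] at this
      exact absurd (lt_of_lt_of_le h0 this) (lt_irrefl 0)
    have hnsucc : ∀ η, ξ₀ ≠ Order.succ η := by
      intro η h
      have hη₀ : η < ξ₀ := h ▸ Order.lt_succ η
      obtain ⟨γ, hγc, h1, h2⟩ := hunb (g η) (hlt₀ η hη₀)
      obtain ⟨ζ, hζ, rfl⟩ := hγc
      have hζ₀ : ζ < ξ₀ := by
        by_contra hc
        push_neg at hc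
        exact absurd h2 (not_lt.2 (hξ₀mem.2.trans (gmono_le ξ₀ ζ hc hζ)))
      have hζη : ζ ≤ η := by
        rw [h, Order.lt_succ_iff] at hζ₀
        exact hζ₀
      exact absurd h1 (not_lt.2 (gmono_le ζ η hζη (hη₀.trans hξ₀mem.1)))
    have hξlim : Order.IsSuccLimit ξ₀ := by
      rcases Ordinal.zero_or_succ_or_isSuccLimit ξ₀ with h | ⟨a, h⟩ | h
      · exact absurd h h0'
      · exact absurd h.symm (hnsucc a)
      · exact h
    refine ⟨ξ₀, hξ₀mem.1, ?_⟩
    rw [hglim ξ₀ hξlim]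
    apply le_antisymm
    · exact Ordinal.bsup_le fun η hη => (hlt₀ η hη).le
    · rw [← hglim ξ₀ hξlim]; exact hξ₀mem.2
  · -- unbounded
    intro x hx
    obtain ⟨ξ, hξ, hxE⟩ := hE2 x hx
    have hξ1 : ξ + 1 < ν.ord := by
      rw [Ordinal.add_one_eq_succ]; exact hνord.succ_lt hξ
    have hs := hstep ξ hξ1 (main ξ hξ).1
    refine ⟨g (ξ + 1), ⟨ξ + 1, hξ1, rfl⟩, ?_, hs.2.2⟩
    exact lt_of_le_of_lt (hxE.trans (hE3 ξ hξ1).le) (lt_of_le_of_lt (le_max_right _ _) hs.2.1)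
  · -- strictly increasing
    rintro _ ⟨η, hη, rfl⟩ _ ⟨ξ, hξ, rfl⟩ hlt
    have hηξ : η < ξ := by
      by_contra h
      push_neg at h
      exact absurd hlt (not_lt.2 (gmono_le ξ η h hη))
    exact ((main ξ hξ).2 η hηξ).2

end Auxiliary
theorem statement8 (ν κ : Cardinal) (hν : ν.IsRegular) (hνu : Cardinal.aleph0 < ν)
    (hκ : κ.IsRegular) (hκu : Cardinal.aleph0 < κ) (hνκ : ν < κ)
    (T : Set Ordinal) (hT : T ⊆ Ecof κ.ord ν)
    (f : Ordinal → Ordinal) (hf : ∀ β < κ.ord, f β < ν.ord)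
    (hns : ¬ StatIn (T ∩ ⋃ i ∈ Set.Iio ν.ord, Tr κ.ord {β | f β = i}) κ.ord) :
    SNRm κ.ord ν T := by
  intro T₀ hT₀ hstat
  refine ⟨f, hf, ?_⟩
  have hκcof : Cardinal.aleph0 < κ.ord.cof := by rw [hκ.cof_eq]; exact hκu
  simp only [StatIn] at hns
  push_neg at hns
  obtain ⟨D, hD, hDe⟩ := hns
  intro C hC
  obtain ⟨α, hα₀, hαC, hαD⟩ := hstat (C ∩ D) (clubIn_inter_s8 hκcof hC hD)
  have hTE := hT₀ hα₀
  have hαT : α ∈ T := hTE.1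
  have hακ : α < κ.ord := hTE.2.1
  have hαE : α.cof = ν := hTE.2.2
  have hnot : ∀ i, i < ν.ord → ¬ StatIn ({β | f β = i} ∩ Set.Iio α) α := by
    intro i hi hstat'
    have hmem : α ∈ (T ∩ ⋃ i ∈ Set.Iio ν.ord, Tr κ.ord {β | f β = i}) ∩ D := by
      refine ⟨⟨hαT, ?_⟩, hαD⟩
      exact Set.mem_biUnion hi ⟨hακ, by rw [hαE]; exact hνu, hstat'⟩
    rw [hDe] at hmem
    exact hmem
  have hch : ∀ i, i < ν.ord → ∃ dd, ClubIn dd α ∧ ∀ β ∈ dd, f β ≠ i := by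
    intro i hi
    have h := hnot i hi
    simp only [StatIn] at h
    push_neg at h
    obtain ⟨dd, hdd, hne⟩ := h
    refine ⟨dd, hdd, fun β hβ hfβ => ?_⟩
    have hmem : β ∈ ({β | f β = i} ∩ Set.Iio α) ∩ dd := ⟨⟨hfβ, hdd.1 hβ⟩, hβ⟩
    rw [hne] at hmem
    exact hmem
  set d : Ordinal → Set Ordinal := fun i => if h : i < ν.ord then (hch i h).choose else ∅
    with hddef
  have hd : ∀ i < ν.ord, ClubIn (d i) α := by
    intro i hi
    simp only [hddef, dif_pos hi]
    exact (hch i hi).choose_spec.1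
  have hdf : ∀ i < ν.ord, ∀ β ∈ d i, f β ≠ i := by
    intro i hi β hβ
    simp only [hddef, dif_pos hi] at hβ
    exact (hch i hi).choose_spec.2 β hβ
  obtain ⟨c, hc, hmono⟩ := key_lemma hν hνu hαE f (fun β hβ => hf β (hβ.trans hακ)) d hd hdf
  exact ⟨α, ⟨hα₀, c, hc, hmono⟩, hαC⟩
end
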